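/- The function -1/(1 + e^z) has the power series expansion Σ_{k≥0} ((2^{k+1} - 1)/(k+1)) · B_{k+1} · z^k / k! valid for |z| < π, where B_k are the Bernoulli numbers with B_1 = -1/2. -/

import Mathlib

open scoped Nat
open Finset

namespace NegInvOneAddExpAux

/-- rational coefficients of the target series -/
def bq (k : ℕ) : ℚ := (2 ^ (k + 1) - 1) * bernoulli (k + 1) / (k + 1)!

/-- coefficients of `1 + exp` -/
def eq' (j : ℕ) : ℚ := if j = 0 then 2 else 1 / j !

lemma X_mul_mk_bq :
    (PowerSeries.X : PowerSeries ℚ) * PowerSeries.mk bq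
      = PowerSeries.rescale 2 (bernoulliPowerSeries ℚ) - bernoulliPowerSeries ℚ := by
  ext n
  rw [map_sub, PowerSeries.coeff_rescale]
  cases n with
  | zero =>
      simp [bernoulliPowerSeries, PowerSeries.coeff_zero_X_mul]
  | succ n =>
      rw [PowerSeries.coeff_succ_X_mul]
      simp only [bernoulliPowerSeries, PowerSeries.coeff_mk, bq, Algebra.algebraMap_self,
        RingHom.id_apply]
      ring

lemma mk_bq_mul : PowerSeries.mk bq * (1 + PowerSeries.exp ℚ) = -1 := by
  set B := bernoulliPowerSeries ℚ with hB
  set E := PowerSeries.exp ℚ with hE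
  have h1 : B * (E - 1) = PowerSeries.X := bernoulliPowerSeries_mul_exp_sub_one ℚ
  have h2 : PowerSeries.rescale (2 : ℚ) E = E * E := by
    have h := PowerSeries.exp_mul_exp_eq_exp_add (1 : ℚ) 1
    rw [PowerSeries.rescale_one] at h
    norm_num at h
    exact h.symm
  have h3 : PowerSeries.rescale (2 : ℚ) B * (E * E - 1) = 2 * PowerSeries.X := by
    have h := congrArg (PowerSeries.rescale (2 : ℚ)) h1
    rw [map_mul, map_sub, map_one, PowerSeries.rescale_X, h2] at h
    rw [h]
    simp [map_ofNat]
  have hXne : (PowerSeries.X : PowerSeries ℚ) ≠ 0 := PowerSeries.X_ne_zero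
  have hEne : E - 1 ≠ 0 := by
    intro h
    have h' := congrArg (PowerSeries.coeff 1) h
    simp [hE, PowerSeries.coeff_exp] at h'
  have h4 : (PowerSeries.X : PowerSeries ℚ) * PowerSeries.mk bq
      = PowerSeries.rescale 2 B - B := X_mul_mk_bq
  have key : (PowerSeries.mk bq * (1 + E) - (-1)) * (PowerSeries.X * (E - 1)) = 0 := by
    linear_combination ((1 + E) * (E - 1)) * h4 + h3 - (1 + E) * h1
  rcases mul_eq_zero.mp key with h | h
  · exact sub_eq_zero.mp h
  · exact absurd h (mul_ne_zero hXne hEne)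

lemma bq_rec (n : ℕ) :
    ∑ kl ∈ antidiagonal n, bq kl.1 * eq' kl.2 = if n = 0 then -1 else 0 := by
  have h := congrArg (PowerSeries.coeff n) mk_bq_mul
  rw [PowerSeries.coeff_mul] at h
  have hco : ∀ j, PowerSeries.coeff j (1 + PowerSeries.exp ℚ) = eq' j := by
    intro j
    rw [map_add, PowerSeries.coeff_one, PowerSeries.coeff_exp]
    rcases eq_or_ne j 0 with rfl | hj
    · norm_num [eq']
    · simp [eq', hj]
  simp only [PowerSeries.coeff_mk, hco] at h
  rw [h, map_neg, PowerSeries.coeff_one]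
  split_ifs <;> norm_num

/-- complex coefficients of the target series -/
noncomputable def cc (k : ℕ) : ℂ := ((2 ^ (k + 1) - 1 : ℂ) / (k + 1)) * (bernoulli (k + 1) : ℂ) / k !

/-- complex coefficients of `1 + exp` -/
noncomputable def ec (j : ℕ) : ℂ := if j = 0 then 2 else 1 / j !

lemma cc_eq (k : ℕ) : cc k = ((bq k : ℚ) : ℂ) := by
  rw [cc, bq]
  have h1 : ((k : ℂ) + 1) ≠ 0 := Nat.cast_add_one_ne_zero k
  have h2 : ((k ! : ℂ)) ≠ 0 := Nat.cast_ne_zero.mpr k.factorial_ne_zero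
  push_cast [Nat.factorial_succ]
  field_simp

lemma ec_eq (j : ℕ) : ec j = ((eq' j : ℚ) : ℂ) := by
  rw [ec, eq']
  split_ifs <;> push_cast <;> norm_num

lemma cc_rec (n : ℕ) :
    ∑ kl ∈ antidiagonal n, cc kl.1 * ec kl.2 = if n = 0 then -1 else 0 := by
  have h := bq_rec n
  have h' := congrArg (fun q : ℚ => (q : ℂ)) h
  push_cast [apply_ite (Rat.cast : ℚ → ℂ)] at h'
  simp only [cc_eq, ec_eq]
  rw [h']

lemma coeff_eq_zero_of_hasSum (a : ℕ → ℂ)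
    (h : ∀ᶠ w in nhds (0 : ℂ), HasSum (fun n => a n * w ^ n) 0) : ∀ n, a n = 0 := by
  have hc : ∀ n, (FormalMultilinearSeries.ofScalars ℂ a).coeff n = a n := by
    intro n
    simp [FormalMultilinearSeries.ofScalars, FormalMultilinearSeries.coeff, Pi.one_def,
      List.ofFn_const, List.prod_replicate, one_pow]
  have hq : HasFPowerSeriesAt (0 : ℂ → ℂ) (FormalMultilinearSeries.ofScalars ℂ a) 0 := by
    rw [hasFPowerSeriesAt_iff]
    filter_upwards [h] with w hw
    simpa [hc, smul_eq_mul, mul_comm] using hw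
  have h0 : a = 0 := by
    have := hq.eq_zero
    rwa [FormalMultilinearSeries.ofScalars_series_eq_zero] at this
  intro n
  rw [h0]
  rfl

lemma rec_unique (a b e : ℕ → ℂ) (he : e 0 ≠ 0)
    (hab : ∀ n, ∑ kl ∈ antidiagonal n, a kl.1 * e kl.2
              = ∑ kl ∈ antidiagonal n, b kl.1 * e kl.2) : ∀ n, a n = b n := by
  intro n
  induction n using Nat.strong_induction_on with
  | _ n ih =>
    have h := hab n
    rw [Finset.Nat.sum_antidiagonal_eq_sum_range_succ_mk,
      Finset.Nat.sum_antidiagonal_eq_sum_range_succ_mk, Finset.sum_range_succ,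
      Finset.sum_range_succ] at h
    have heq : ∑ k ∈ range n, a k * e (n - k) = ∑ k ∈ range n, b k * e (n - k) :=
      Finset.sum_congr rfl fun k hk => by rw [ih k (mem_range.mp hk)]
    rw [heq] at h
    have h2 := add_left_cancel h
    rw [Nat.sub_self] at h2
    exact mul_right_cancel₀ he h2

end NegInvOneAddExpAux

open NegInvOneAddExpAux FormalMultilinearSeries in
theorem neg_inv_one_add_exp_series (z : ℂ) (hz : ‖z‖ < Real.pi) :
    HasSum
      (fun k : ℕ => ((2 ^ (k + 1) - 1 : ℂ) / (k + 1)) * (bernoulli (k + 1) : ℂ)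
        * z ^ k / (Nat.factorial k : ℂ))
      (-1 / (1 + Complex.exp z)) := by
  classical
  obtain ⟨r, hzr, hrπ⟩ := exists_between hz
  have hr0 : 0 < r := lt_of_le_of_lt (norm_nonneg z) hzr
  set f : ℂ → ℂ := fun w => -1 / (1 + Complex.exp w) with hf
  have hne : ∀ w : ℂ, ‖w‖ < Real.pi → 1 + Complex.exp w ≠ 0 := by
    intro w hw h
    have hexpw : Complex.exp w = -1 := by linear_combination h
    have hexp : Complex.exp (2 * w) = 1 := by
      rw [two_mul, Complex.exp_add, hexpw]; ring
    obtain ⟨n, hn⟩ := Complex.exp_eq_one_iff.mp hexp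
    have hw' : w = n * Real.pi * Complex.I := by
      have h2 : (2 : ℂ) * w = 2 * ((n : ℂ) * Real.pi * Complex.I) := by rw [hn]; ring
      exact mul_left_cancel₀ two_ne_zero h2
    rcases eq_or_ne n 0 with rfl | hn0
    · rw [hw'] at hexpw
      simp [Complex.exp_zero] at hexpw
      norm_num at hexpw
    · have h1n : (1 : ℝ) ≤ |(n : ℝ)| := by
        rw [← Int.cast_abs]
        exact_mod_cast Int.one_le_abs hn0
      have hnorm : ‖w‖ = |(n : ℝ)| * Real.pi := by
        rw [hw']
        simp only [norm_mul, Complex.norm_I, mul_one, Complex.norm_real,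
          Real.norm_eq_abs, abs_of_pos Real.pi_pos]
        rw [show ((n : ℂ)) = ((n : ℝ) : ℂ) by push_cast; ring, Complex.norm_real,
          Real.norm_eq_abs]
      have : Real.pi ≤ ‖w‖ := by
        rw [hnorm]
        nlinarith [Real.pi_pos]
      linarith
  set R : NNReal := ⟨r, hr0.le⟩ with hR
  have hdiff : DifferentiableOn ℂ f (Metric.closedBall (0 : ℂ) R) := by
    apply DifferentiableOn.div (differentiableOn_const _)
    · exact ((differentiable_const (1 : ℂ)).add Complex.differentiable_exp).differentiableOn
    · intro w hw
      apply hne w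
      have hwr : ‖w‖ ≤ r := by
        exact (by simpa [dist_eq_norm] using Metric.mem_closedBall.mp hw : ‖w‖ ≤ (R : ℝ))
      linarith
  have hp := hdiff.hasFPowerSeriesOnBall (by exact_mod_cast hr0)
  set p := cauchyPowerSeries f 0 R with hpdef
  set a : ℕ → ℂ := fun n => p.coeff n with ha
  have hz' : z ∈ Metric.eball (0 : ℂ) R := by
    rw [Metric.mem_eball, edist_zero_right]
    exact_mod_cast hzr
  have hsum : HasSum (fun n => a n * z ^ n) (f z) := by
    have h := hp.hasSum hz'
    simp only [apply_eq_pow_smul_coeff, smul_eq_mul, zero_add] at h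
    simpa [mul_comm] using h
  have hpa : HasFPowerSeriesAt f p 0 := hp.hasFPowerSeriesAt
  obtain ⟨r0, hball⟩ := hpa
  have hr0' : 0 < r0 := hball.r_pos
  have hrec : ∀ n, ∑ kl ∈ antidiagonal n, a kl.1 * ec kl.2 = if n = 0 then -1 else 0 := by
    have hzero := coeff_eq_zero_of_hasSum
      (fun n => (∑ kl ∈ antidiagonal n, a kl.1 * ec kl.2) - (if n = 0 then -1 else 0)) ?_
    · intro n
      have := hzero n
      have h' := sub_eq_zero.mp this
      exact h'
    have h1 : ∀ᶠ w in nhds (0 : ℂ), w ∈ Metric.eball (0 : ℂ) r0 :=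
      Metric.eball_mem_nhds _ hr0'
    have h2 : ∀ᶠ w in nhds (0 : ℂ), 1 + Complex.exp w ≠ 0 := by
      have hc : ContinuousAt (fun w => 1 + Complex.exp w) 0 :=
        (continuous_const.add Complex.continuous_exp).continuousAt
      apply hc.eventually_ne
      rw [Complex.exp_zero]
      norm_num
    filter_upwards [h1, h2] with w hw1 hw2
    have hS1 : HasSum (fun n => a n * w ^ n) (f w) := by
      have h := hball.hasSum (by simpa using hw1)
      simp only [apply_eq_pow_smul_coeff, smul_eq_mul, zero_add] at h
      simpa [mul_comm] using h
    have hN1 : Summable (fun n => ‖a n * w ^ n‖) := by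
      have hwrad : w ∈ Metric.eball (0 : ℂ) p.radius :=
        Metric.eball_subset_eball hball.r_le hw1
      have h := p.summable_norm_apply hwrad
      simp only [apply_eq_pow_smul_coeff, norm_smul] at h
      apply h.congr
      intro n
      rw [norm_mul, mul_comm]
    have hS2 : HasSum (fun n => ec n * w ^ n) (1 + Complex.exp w) := by
      have hexp : HasSum (fun n => w ^ n / n !) (Complex.exp w) := by
        rw [Complex.exp_eq_exp_ℂ]
        exact NormedSpace.expSeries_div_hasSum_exp w
      have hone : HasSum (fun n => if n = 0 then (1 : ℂ) else 0) 1 :=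
        hasSum_ite_eq (0 : ℕ) (1 : ℂ)
      have hadd := hone.add hexp
      have hfun : (fun n : ℕ => ec n * w ^ n)
          = fun n => (if n = 0 then (1 : ℂ) else 0) + w ^ n / n ! := by
        funext n
        simp only [ec]
        split_ifs with h
        · subst h; norm_num
        · rw [zero_add, one_div, inv_mul_eq_div]
      rw [hfun]
      exact hadd
    have hN2 : Summable (fun n => ‖ec n * w ^ n‖) := by
      have hexp : Summable (fun n => ‖w‖ ^ n / n !) := Real.summable_pow_div_factorial ‖w‖
      have hone : Summable (fun n => if n = 0 then (1 : ℝ) else 0) :=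
        summable_of_ne_finset_zero (s := {0}) (by intro n hn; simp at hn; simp [hn])
      apply (hone.add hexp).of_nonneg_of_le (fun n => norm_nonneg _)
      intro n
      rw [norm_mul]
      simp only [ec]
      split_ifs with h
      · subst h
        simp
        norm_num
      · simp only [ec, h, if_false, norm_mul, norm_div, norm_one, norm_pow,
          Complex.norm_natCast]
        rw [zero_add]
        exact le_of_eq (by ring)
    have hprod := tsum_mul_tsum_eq_tsum_sum_antidiagonal_of_summable_norm hN1 hN2
    rw [hS1.tsum_eq, hS2.tsum_eq] at hprod
    have hfw : f w * (1 + Complex.exp w) = -1 := by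
      rw [hf]
      field_simp
    rw [hfw] at hprod
    have hsummable : Summable (fun n => ∑ kl ∈ antidiagonal n,
        (a kl.1 * w ^ kl.1) * (ec kl.2 * w ^ kl.2)) :=
      (summable_norm_sum_mul_antidiagonal_of_summable_norm hN1 hN2).of_norm
    have hS3 : HasSum (fun n => ∑ kl ∈ antidiagonal n,
        (a kl.1 * w ^ kl.1) * (ec kl.2 * w ^ kl.2)) (-1) :=
      hsummable.hasSum_iff.mpr hprod.symm
    have hinner : ∀ n, ∑ kl ∈ antidiagonal n, (a kl.1 * w ^ kl.1) * (ec kl.2 * w ^ kl.2)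
        = (∑ kl ∈ antidiagonal n, a kl.1 * ec kl.2) * w ^ n := by
      intro n
      rw [Finset.sum_mul]
      apply Finset.sum_congr rfl
      rintro ⟨i, j⟩ hij
      have hij' : i + j = n := Finset.HasAntidiagonal.mem_antidiagonal.mp hij
      rw [← hij', pow_add]
      ring
    simp only [hinner] at hS3
    have hS4 : HasSum (fun n => (if n = 0 then (-1 : ℂ) else 0) * w ^ n) (-1) := by
      have hfn : (fun n : ℕ => (if n = 0 then (-1 : ℂ) else 0) * w ^ n)
          = fun n => if n = 0 then -1 else 0 := by
        funext n
        split_ifs with h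
        · subst h; simp
        · simp
      rw [hfn]
      exact hasSum_ite_eq (0 : ℕ) (-1 : ℂ)
    have h6 := hS3.sub hS4
    simpa [sub_mul] using h6
  have haeq : ∀ n, a n = cc n :=
    rec_unique a cc ec (by norm_num [ec]) (fun n => by rw [hrec n, cc_rec n])
  simp only [haeq] at hsum
  have hfn : (fun k : ℕ => ((2 ^ (k + 1) - 1 : ℂ) / (k + 1)) * (bernoulli (k + 1) : ℂ)
      * z ^ k / (Nat.factorial k : ℂ)) = fun k => cc k * z ^ k := by
    funext k
    rw [cc]
    ring
  rw [hfn]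
  exact hsum
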